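/- Let Q(X) = (X^q − X^{q^3})(X − X^{q^2}) − β (X − X^{q^3})(X^q − X^{q^2}) for some β ∈ F_{q^m}. Then (X^q − X)^{q+1} divides Q(X) in F_{q^m}[X]. -/
import Mathlib


open Module Polynomial

def frobV {L : Type*} [Field L] (q s : ℕ) {n : ℕ} (v : Fin n → L) : Fin n → L :=
  fun i => v i ^ q ^ s

/-- The Gabidulin code of dimension `k` with support vector `a`: evaluations of
`q`-polynomials of `q`-degree `< k`, i.e. the span of the Frobenius powers of `a`. -/
def gab {L : Type*} [Field L] (q k : ℕ) {n : ℕ} (a : Fin n → L) : Submodule L (Fin n → L) :=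
  Submodule.span L {v : Fin n → L | ∃ j < k, v = frobV q j a}

/-- Componentwise `q^s`-power Frobenius image of a code. -/
def frobCode {L : Type*} [Field L] (q s : ℕ) {n : ℕ} (C : Submodule L (Fin n → L)) :
    Submodule L (Fin n → L) :=
  Submodule.span L (frobV q s '' (C : Set (Fin n → L)))

/-- Dual code with respect to the standard bilinear form. -/
def dualCode {L : Type*} [Field L] {n : ℕ} (C : Submodule L (Fin n → L)) :
    Submodule L (Fin n → L) where
  carrier := {x | ∀ c ∈ C, ∑ i, x i * c i = 0}
  add_mem' := by
    intro a b ha hb c hc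
    simp only [Set.mem_setOf_eq] at *
    simp [add_mul, Finset.sum_add_distrib, ha c hc, hb c hc]
  zero_mem' := by intro c hc; simp
  smul_mem' := by
    intro r x hx c hc
    simp only [Set.mem_setOf_eq] at *
    simp [smul_eq_mul, mul_assoc, ← Finset.mul_sum, hx c hc]

/-- `(X^q - X)^{q+1}` divides
`Q(X) = (X^q - X^{q^3})(X - X^{q^2}) - β (X - X^{q^3})(X^q - X^{q^2})` in `F_{q^m}[X]`. -/
theorem pow_frob_dvd_Q {K L : Type*} [Field K] [Fintype K] [Field L] [Fintype L]
    [Algebra K L] (β : L) :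
    ((X ^ Fintype.card K - X) ^ (Fintype.card K + 1) : L[X])
      ∣ ((X ^ Fintype.card K - X ^ Fintype.card K ^ 3) * (X - X ^ Fintype.card K ^ 2)
          - C β * (X - X ^ Fintype.card K ^ 3) * (X ^ Fintype.card K - X ^ Fintype.card K ^ 2)) := by
  classical
  obtain ⟨p, hpi⟩ := CharP.exists K
  have hCK : CharP K p := hpi
  obtain ⟨n, hpp, hcard⟩ := FiniteField.card K p
  have hCL : CharP L p := charP_of_injective_algebraMap (algebraMap K L).injective p
  have hCP : CharP L[X] p := by infer_instance
  haveI : Fact p.Prime := ⟨hpp⟩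
  set q := Fintype.card K with hqdef
  have hq1 : 1 ≤ q := Fintype.card_pos
  have frob : ∀ g h : L[X], (g - h) ^ q = g ^ q - h ^ q := by
    intro g h
    rw [hcard]
    exact sub_pow_char_pow g h n
  set F : L[X] := X ^ q - X with hF
  have hq2 : (X : L[X]) ^ q ^ 2 = F ^ q + F + X := by
    have h1 : (X : L[X]) ^ q ^ 2 = (X ^ q) ^ q := by rw [← pow_mul, sq]
    rw [h1, hF, frob]; ring
  have hq3 : (X : L[X]) ^ q ^ 3 = F ^ q ^ 2 + F ^ q + F + X := by
    have h1 : (X : L[X]) ^ q ^ 3 = ((X ^ q) ^ q) ^ q := by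
      rw [← pow_mul, ← pow_mul]; ring_nf
    have h2 : F ^ q ^ 2 = (F ^ q) ^ q := by rw [← pow_mul, sq]
    rw [h1, h2, hF, frob, frob]; ring
  rw [hq2, hq3]
  have key : (X ^ q - (F ^ q ^ 2 + F ^ q + F + X)) * (X - (F ^ q + F + X))
      - C β * (X - (F ^ q ^ 2 + F ^ q + F + X)) * (X ^ q - (F ^ q + F + X))
      = ((F ^ (q ^ 2 + q) + F ^ (q ^ 2 + 1) + F ^ (q + q) + F ^ (q + 1))
        - C β * (F ^ (q ^ 2 + q) + F ^ (q + q) + F ^ (q + 1))) := by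
    have hXq : (X : L[X]) ^ q = F + X := by rw [hF]; ring
    rw [hXq]; ring
  rw [key]
  have hd : ∀ k : ℕ, q + 1 ≤ k → F ^ (q + 1) ∣ F ^ k := fun k hk => pow_dvd_pow F hk
  apply dvd_sub
  · apply dvd_add
    apply dvd_add
    apply dvd_add
    · exact hd _ (by nlinarith)
    · exact hd _ (by nlinarith)
    · exact hd _ (by omega)
    · exact hd _ le_rfl
  · apply Dvd.dvd.mul_left
    apply dvd_add
    apply dvd_add
    · exact hd _ (by nlinarith)
    · exact hd _ (by omega)
    · exact hd _ le_rfl
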